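/- Suppose ‖e^{ωL}‖_∞ ≤ 1 for all ω > 0, and f satisfies |ξ + ω f(ξ)| ≤ ρ for all ξ ∈ [-ρ,ρ], ω ∈ (0, ω₀⁺]. If ‖uⁿ‖_∞ ≤ ρ and 0 < τ ≤ (3/4)ω₀⁺, then all stages of the third-order IFRK scheme u⁽¹⁾ = (1/2)e^{(2τ/3)L}uⁿ + (1/2)e^{(2τ/3)L}(uⁿ + (4τ/3)f(uⁿ)), u⁽²⁾ = (2/3)e^{(2τ/3)L}uⁿ + (1/3)(u⁽¹⁾ + (4τ/3)f(u⁽¹⁾)), u^{n+1} = (59/128)e^{τL}uⁿ + (15/128)e^{τL}(uⁿ + (4τ/3)f(uⁿ)) + (27/64)e^{(τ/3)L}(u⁽²⁾ + (4τ/3)f(u⁽²⁾)) satisfy ‖u⁽¹⁾‖_∞, ‖u⁽²⁾‖_∞, ‖u^{n+1}‖_∞ ≤ ρ. -/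

import Mathlib

open scoped BigOperators Kronecker

attribute [local instance] Matrix.linftyOpNormedRing Matrix.linftyOpNormedAlgebra

/-- The matrix `∞`-norm: maximum absolute row sum (the operator norm induced by the
vector supremum norm). -/
noncomputable def rowSumNorm {n : Type*} [Fintype n] (A : Matrix n n ℝ) : ℝ :=
  ⨆ i, ∑ j, |A i j|

/-- The logarithmic `∞`-norm `μ_∞(A) = max_i (a_ii + ∑_{j≠i} |a_ij|)`. -/
noncomputable def logNormInf {n : Type*} [Fintype n] [DecidableEq n] (A : Matrix n n ℝ) : ℝ :=
  ⨆ i, (A i i + ∑ j ∈ Finset.univ.erase i, |A i j|)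

lemma norm_le_of_rowSumNorm_le {n : Type*} [Fintype n] [DecidableEq n] (A : Matrix n n ℝ)
    (h : rowSumNorm A ≤ 1) : ‖A‖ ≤ 1 := by
  have h1 : ‖A‖₊ ≤ 1 := by
    rw [Matrix.linfty_opNNNorm_def]
    apply Finset.sup_le
    intro i _
    rw [← NNReal.coe_le_coe]
    push_cast
    have hle : ∑ j, |A i j| ≤ rowSumNorm A :=
      le_ciSup (f := fun i => ∑ j, |A i j|) (Set.Finite.bddAbove (Set.finite_range _)) i
    calc ∑ j, (‖A i j‖₊ : ℝ) = ∑ j, |A i j| := by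
          simp [Real.norm_eq_abs]
      _ ≤ 1 := hle.trans h
  calc ‖A‖ = (‖A‖₊ : ℝ) := rfl
    _ ≤ 1 := h1

lemma mulVec_norm_le {n : Type*} [Fintype n] [DecidableEq n] (A : Matrix n n ℝ) (v : n → ℝ)
    (h : rowSumNorm A ≤ 1) : ‖A.mulVec v‖ ≤ ‖v‖ := by
  calc ‖A.mulVec v‖ ≤ ‖A‖ * ‖v‖ := Matrix.linfty_opNorm_mulVec A v
    _ ≤ 1 * ‖v‖ := by
        apply mul_le_mul_of_nonneg_right (norm_le_of_rowSumNorm_le A h) (norm_nonneg v)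
    _ = ‖v‖ := one_mul _

theorem stmt_13 {m : ℕ} (L : Matrix (Fin m) (Fin m) ℝ) (f : ℝ → ℝ)
    (ρ ω₀ τ : ℝ) (hρ : 0 < ρ) (hω₀ : 0 < ω₀)
    (hL : ∀ ω : ℝ, 0 < ω → rowSumNorm (NormedSpace.exp (ω • L)) ≤ 1)
    (hf : ∀ ξ : ℝ, |ξ| ≤ ρ → ∀ ω : ℝ, 0 < ω → ω ≤ ω₀ → |ξ + ω * f ξ| ≤ ρ)
    (u u1 u2 u' : Fin m → ℝ) (hu : ‖u‖ ≤ ρ) (hτ0 : 0 < τ) (hτ : τ ≤ 3 / 4 * ω₀)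
    (hu1 : u1 = (1 / 2 : ℝ) • (NormedSpace.exp ((2 * τ / 3) • L)).mulVec u
        + (1 / 2 : ℝ) • (NormedSpace.exp ((2 * τ / 3) • L)).mulVec
            (u + (4 * τ / 3) • fun i => f (u i)))
    (hu2 : u2 = (2 / 3 : ℝ) • (NormedSpace.exp ((2 * τ / 3) • L)).mulVec u
        + (1 / 3 : ℝ) • (u1 + (4 * τ / 3) • fun i => f (u1 i)))
    (hu' : u' = (59 / 128 : ℝ) • (NormedSpace.exp (τ • L)).mulVec u
        + (15 / 128 : ℝ) • (NormedSpace.exp (τ • L)).mulVec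
            (u + (4 * τ / 3) • fun i => f (u i))
        + (27 / 64 : ℝ) • (NormedSpace.exp ((τ / 3) • L)).mulVec
            (u2 + (4 * τ / 3) • fun i => f (u2 i))) :
    ‖u1‖ ≤ ρ ∧ ‖u2‖ ≤ ρ ∧ ‖u'‖ ≤ ρ := by
  have hω : (0:ℝ) < 4 * τ / 3 := by linarith
  have hωle : 4 * τ / 3 ≤ ω₀ := by linarith
  -- Euler step preserves the ball
  have euler : ∀ v : Fin m → ℝ, ‖v‖ ≤ ρ → ‖v + (4 * τ / 3) • fun i => f (v i)‖ ≤ ρ := by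
    intro v hv
    rw [pi_norm_le_iff_of_nonneg hρ.le]
    intro i
    have hvi : |v i| ≤ ρ := by
      calc |v i| = ‖v i‖ := rfl
        _ ≤ ‖v‖ := norm_le_pi_norm v i
        _ ≤ ρ := hv
    have := hf (v i) hvi (4 * τ / 3) hω hωle
    simpa [Real.norm_eq_abs] using this
  have hexp : ∀ (ω : ℝ), 0 < ω → ∀ v : Fin m → ℝ, ‖v‖ ≤ ρ →
      ‖(NormedSpace.exp (ω • L)).mulVec v‖ ≤ ρ := by
    intro ω hωpos v hv
    exact (mulVec_norm_le _ v (hL ω hωpos)).trans hv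
  have hEu : ‖u + (4 * τ / 3) • fun i => f (u i)‖ ≤ ρ := euler u hu
  have h23 : (0:ℝ) < 2 * τ / 3 := by linarith
  have hu1n : ‖u1‖ ≤ ρ := by
    rw [hu1]
    calc ‖_ + _‖ ≤ ‖(1 / 2 : ℝ) • (NormedSpace.exp ((2 * τ / 3) • L)).mulVec u‖
        + ‖(1 / 2 : ℝ) • (NormedSpace.exp ((2 * τ / 3) • L)).mulVec
            (u + (4 * τ / 3) • fun i => f (u i))‖ := norm_add_le _ _
      _ ≤ (1/2) * ρ + (1/2) * ρ := by
          gcongr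
          · rw [norm_smul, Real.norm_eq_abs, abs_of_pos (by norm_num : (0:ℝ) < _)]
            gcongr
            exact hexp _ h23 u hu
          · rw [norm_smul, Real.norm_eq_abs, abs_of_pos (by norm_num : (0:ℝ) < _)]
            gcongr
            exact hexp _ h23 _ hEu
      _ = ρ := by ring
  have hEu1 : ‖u1 + (4 * τ / 3) • fun i => f (u1 i)‖ ≤ ρ := euler u1 hu1n
  have hu2n : ‖u2‖ ≤ ρ := by
    rw [hu2]
    calc ‖_ + _‖ ≤ ‖(2 / 3 : ℝ) • (NormedSpace.exp ((2 * τ / 3) • L)).mulVec u‖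
        + ‖(1 / 3 : ℝ) • (u1 + (4 * τ / 3) • fun i => f (u1 i))‖ := norm_add_le _ _
      _ ≤ (2/3) * ρ + (1/3) * ρ := by
          gcongr
          · rw [norm_smul, Real.norm_eq_abs, abs_of_pos (by norm_num : (0:ℝ) < _)]
            gcongr
            exact hexp _ h23 u hu
          · rw [norm_smul, Real.norm_eq_abs, abs_of_pos (by norm_num : (0:ℝ) < _)]
            gcongr
      _ = ρ := by ring
  have hEu2 : ‖u2 + (4 * τ / 3) • fun i => f (u2 i)‖ ≤ ρ := euler u2 hu2n
  have h13 : (0:ℝ) < τ / 3 := by linarith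
  refine ⟨hu1n, hu2n, ?_⟩
  rw [hu']
  calc ‖_ + _ + _‖ ≤ ‖(59 / 128 : ℝ) • (NormedSpace.exp (τ • L)).mulVec u
        + (15 / 128 : ℝ) • (NormedSpace.exp (τ • L)).mulVec
            (u + (4 * τ / 3) • fun i => f (u i))‖
      + ‖(27 / 64 : ℝ) • (NormedSpace.exp ((τ / 3) • L)).mulVec
            (u2 + (4 * τ / 3) • fun i => f (u2 i))‖ := norm_add_le _ _
    _ ≤ (‖(59 / 128 : ℝ) • (NormedSpace.exp (τ • L)).mulVec u‖
        + ‖(15 / 128 : ℝ) • (NormedSpace.exp (τ • L)).mulVec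
            (u + (4 * τ / 3) • fun i => f (u i))‖)
      + ‖(27 / 64 : ℝ) • (NormedSpace.exp ((τ / 3) • L)).mulVec
            (u2 + (4 * τ / 3) • fun i => f (u2 i))‖ := by
        gcongr
        exact norm_add_le _ _
    _ ≤ ((59/128) * ρ + (15/128) * ρ) + (27/64) * ρ := by
        gcongr
        · rw [norm_smul, Real.norm_eq_abs, abs_of_pos (by norm_num : (0:ℝ) < _)]
          gcongr
          exact hexp _ hτ0 u hu
        · rw [norm_smul, Real.norm_eq_abs, abs_of_pos (by norm_num : (0:ℝ) < _)]
          gcongr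
          exact hexp _ hτ0 _ hEu
        · rw [norm_smul, Real.norm_eq_abs, abs_of_pos (by norm_num : (0:ℝ) < _)]
          gcongr
          exact hexp _ h13 _ hEu2
    _ = ρ := by ring
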